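/- Sufficiency of the restricted discrete fractional Euler–Lagrange equations: let x_d, y_d : Fin (N+1) → ℝ^d with fixed endpoints, and consider the discrete action S_d(x_d, y_d) = ∑_{k=0}^{N-1} (L_d(x_k, x_{k+1}) + L_d(y_k, y_{k+1})) − μ h ∑_{k=0}^{N} (J₋^{-α} x)_k · (J₊^{-β} y)_k. If for all k = 1,...,N−1 the equations D₁L_d(x_k, x_{k+1}) + D₂L_d(x_{k-1}, x_k) = μ h (J₋^{-(α+β)} x)_k and D₁L_d(y_k, y_{k+1}) + D₂L_d(y_{k-1}, y_k) = μ h (J₊^{-(α+β)} y)_k hold, then the restricted first variation vanishes: d/dε|_{ε=0} S_d(x_d + ε δx, y_d + ε δx) = 0 for all variations δx with δx_0 = δx_N = 0. -/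

import Mathlib

/-- Backward discrete convolution `(J₋ x)_k = ∑_{n=0}^k ω_n x_{k-n}`. -/
noncomputable def Jm {d : ℕ} (w : ℕ → ℝ) (x : ℕ → EuclideanSpace ℝ (Fin d)) (k : ℕ) :
    EuclideanSpace ℝ (Fin d) :=
  ∑ n ∈ Finset.range (k + 1), w n • x (k - n)

/-- Forward discrete convolution `(J₊ y)_k = ∑_{n=0}^{N-k} ω_n y_{k+n}`. -/
noncomputable def Jp {d : ℕ} (N : ℕ) (w : ℕ → ℝ) (y : ℕ → EuclideanSpace ℝ (Fin d)) (k : ℕ) :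
    EuclideanSpace ℝ (Fin d) :=
  ∑ n ∈ Finset.range (N - k + 1), w n • y (k + n)

section Aux

variable {d : ℕ}

/-- Triangle reindexing: summing over `{(m,n) : m + n ≤ K}` along `m` first or along
`s = m + n` first. -/
lemma sum_triangle_aux {M : Type*} [AddCommMonoid M] (K : ℕ) (f : ℕ → ℕ → M) :
    ∑ m ∈ Finset.range (K+1), ∑ n ∈ Finset.range (K - m + 1), f m n
      = ∑ s ∈ Finset.range (K+1), ∑ m ∈ Finset.range (s+1), f m (s - m) := by
  have h1 : ∀ m ∈ Finset.range (K+1),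
      ∑ n ∈ Finset.range (K - m + 1), f m n = ∑ s ∈ Finset.Ico m (K+1), f m (s - m) := by
    intro m hm
    rw [Finset.sum_Ico_eq_sum_range]
    have : K + 1 - m = K - m + 1 := by
      simp only [Finset.mem_range] at hm; omega
    rw [this]
    exact Finset.sum_congr rfl fun n _ => by simp
  rw [Finset.sum_congr rfl h1]
  exact Finset.sum_comm' (by intro a b; simp only [Finset.mem_range, Finset.mem_Ico]; omega)

lemma Jm_add_smul (w : ℕ → ℝ) (x δ : ℕ → EuclideanSpace ℝ (Fin d)) (ε : ℝ) (k : ℕ) :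
    Jm w (fun j => x j + ε • δ j) k = Jm w x k + ε • Jm w δ k := by
  simp [Jm, smul_add, Finset.sum_add_distrib, Finset.smul_sum, smul_comm ε]

lemma Jp_add_smul (N : ℕ) (w : ℕ → ℝ) (y δ : ℕ → EuclideanSpace ℝ (Fin d)) (ε : ℝ) (k : ℕ) :
    Jp N w (fun j => y j + ε • δ j) k = Jp N w y k + ε • Jp N w δ k := by
  simp [Jp, smul_add, Finset.sum_add_distrib, Finset.smul_sum, smul_comm ε]

/-- `J₊` is the adjoint of `J₋` with respect to the discrete inner product. -/
lemma Jm_adjoint (N : ℕ) (w : ℕ → ℝ) (u v : ℕ → EuclideanSpace ℝ (Fin d)) :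
    ∑ k ∈ Finset.range (N+1), (inner ℝ (Jm w u k) (v k) : ℝ)
      = ∑ k ∈ Finset.range (N+1), (inner ℝ (u k) (Jp N w v k) : ℝ) := by
  have lhs : ∀ k ∈ Finset.range (N+1), (inner ℝ (Jm w u k) (v k) : ℝ)
      = ∑ j ∈ Finset.range (k+1), w (k - j) * (inner ℝ (u j) (v k) : ℝ) := by
    intro k _
    rw [Jm, sum_inner]
    rw [← Finset.sum_range_reflect (fun j => w (k - j) * (inner ℝ (u j) (v k) : ℝ)) (k+1)]
    refine Finset.sum_congr rfl fun n hn => ?_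
    simp only [Finset.mem_range] at hn
    have h1 : k + 1 - 1 - n = k - n := by omega
    have h2 : k - (k - n) = n := by omega
    rw [h1, h2, real_inner_smul_left]
  rw [Finset.sum_congr rfl lhs]
  rw [Finset.sum_comm' (s' := fun j => Finset.Ico j (N+1)) (t' := Finset.range (N+1))
    (by intro a b; simp only [Finset.mem_range, Finset.mem_Ico]; omega)]
  refine Finset.sum_congr rfl fun j hj => ?_
  simp only [Finset.mem_range] at hj
  rw [Finset.sum_Ico_eq_sum_range]
  have : N + 1 - j = N - j + 1 := by omega
  rw [this, Jp, inner_sum]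
  refine Finset.sum_congr rfl fun m _ => ?_
  have : j + m - j = m := by omega
  rw [this, real_inner_smul_right]

lemma Jp_comp (N : ℕ) (ωa ωb ωab : ℕ → ℝ)
    (hcauchy : ∀ n, ∑ j ∈ Finset.range (n + 1), ωa j * ωb (n - j) = ωab n)
    (y : ℕ → EuclideanSpace ℝ (Fin d)) (k : ℕ) :
    Jp N ωa (fun j => Jp N ωb y j) k = Jp N ωab y k := by
  simp only [Jp, Finset.smul_sum]
  have step : ∀ m, ∑ n ∈ Finset.range (N - (k + m) + 1), ωa m • ωb n • y (k + m + n)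
      = ∑ n ∈ Finset.range (N - k - m + 1), (ωa m * ωb n) • y (k + (m + n)) := by
    intro m
    have : N - (k + m) = N - k - m := by omega
    rw [this]
    refine Finset.sum_congr rfl fun n _ => ?_
    rw [smul_smul, add_assoc]
  rw [Finset.sum_congr rfl fun m _ => step m]
  rw [sum_triangle_aux (N - k) (fun m n => (ωa m * ωb n) • y (k + (m + n)))]
  refine Finset.sum_congr rfl fun s hs => ?_
  have : ∀ m ∈ Finset.range (s+1), (ωa m * ωb (s - m)) • y (k + (m + (s - m)))
      = (ωa m * ωb (s - m)) • y (k + s) := by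
    intro m hm
    simp only [Finset.mem_range] at hm
    have : m + (s - m) = s := by omega
    rw [this]
  rw [Finset.sum_congr rfl this, ← Finset.sum_smul, hcauchy s]

lemma Jm_comp (ωa ωb ωab : ℕ → ℝ)
    (hcauchy : ∀ n, ∑ j ∈ Finset.range (n + 1), ωa j * ωb (n - j) = ωab n)
    (x : ℕ → EuclideanSpace ℝ (Fin d)) (k : ℕ) :
    Jm ωb (fun j => Jm ωa x j) k = Jm ωab x k := by
  have hc' : ∀ s, ∑ n ∈ Finset.range (s + 1), ωb n * ωa (s - n) = ωab s := by
    intro s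
    rw [← hcauchy s, ← Finset.sum_range_reflect (fun j => ωa j * ωb (s - j)) (s+1)]
    refine Finset.sum_congr rfl fun n hn => ?_
    simp only [Finset.mem_range] at hn
    have h1 : s + 1 - 1 - n = s - n := by omega
    have h2 : s - (s - n) = n := by omega
    rw [h1, h2, mul_comm]
  simp only [Jm, Finset.smul_sum]
  have step2 : ∀ n, ∑ m ∈ Finset.range (k - n + 1), ωb n • ωa m • x (k - n - m)
      = ∑ m ∈ Finset.range (k - n + 1), (ωb n * ωa m) • x (k - (n + m)) := by
    intro n
    refine Finset.sum_congr rfl fun m _ => ?_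
    rw [smul_smul, Nat.sub_sub]
  rw [Finset.sum_congr rfl fun n _ => step2 n]
  rw [sum_triangle_aux k (fun n m => (ωb n * ωa m) • x (k - (n + m)))]
  refine Finset.sum_congr rfl fun s hs => ?_
  have : ∀ n ∈ Finset.range (s+1), (ωb n * ωa (s - n)) • x (k - (n + (s - n)))
      = (ωb n * ωa (s - n)) • x (k - s) := by
    intro n hn
    simp only [Finset.mem_range] at hn
    have : n + (s - n) = s := by omega
    rw [this]
  rw [Finset.sum_congr rfl this, ← Finset.sum_smul, hc' s]

lemma hasDerivAt_affine (a u : EuclideanSpace ℝ (Fin d)) :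
    HasDerivAt (fun ε : ℝ => a + ε • u) u 0 := by
  simpa using ((hasDerivAt_id (0:ℝ)).smul_const u).const_add a

lemma hasDerivAt_Ld (Ld : EuclideanSpace ℝ (Fin d) → EuclideanSpace ℝ (Fin d) → ℝ)
    (hLd : Differentiable ℝ
      (fun p : EuclideanSpace ℝ (Fin d) × EuclideanSpace ℝ (Fin d) => Ld p.1 p.2))
    (a b u v : EuclideanSpace ℝ (Fin d)) :
    HasDerivAt (fun ε : ℝ => Ld (a + ε • u) (b + ε • v))
      (fderiv ℝ (fun a' => Ld a' b) a u + fderiv ℝ (fun b' => Ld a b') b v) 0 := by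
  set F := fun p : EuclideanSpace ℝ (Fin d) × EuclideanSpace ℝ (Fin d) => Ld p.1 p.2 with hF
  have hγ : HasDerivAt (fun ε : ℝ => (a + ε • u, b + ε • v)) (u, v) 0 :=
    (hasDerivAt_affine a u).prodMk (hasDerivAt_affine b v)
  have hFp : HasFDerivAt F (fderiv ℝ F (a, b)) (a, b) := (hLd (a, b)).hasFDerivAt
  have h0 : (a + (0:ℝ) • u, b + (0:ℝ) • v) = (a, b) := by simp
  have hFp' : HasFDerivAt F (fderiv ℝ F (a, b)) (a + (0:ℝ) • u, b + (0:ℝ) • v) := by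
    rw [h0]; exact hFp
  have hcomp : HasDerivAt (fun ε : ℝ => Ld (a + ε • u) (b + ε • v))
      (fderiv ℝ F (a, b) (u, v)) 0 := by have := hFp'.comp_hasDerivAt 0 hγ; exact this
  have hL : HasFDerivAt (fun a' => Ld a' b)
      ((fderiv ℝ F (a, b)).comp (ContinuousLinearMap.inl ℝ _ _)) a :=
    by have := hFp.comp a (hasFDerivAt_prodMk_left (𝕜 := ℝ) a b); exact this
  have hR : HasFDerivAt (fun b' => Ld a b')
      ((fderiv ℝ F (a, b)).comp (ContinuousLinearMap.inr ℝ _ _)) b :=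
    hFp.comp b (hasFDerivAt_prodMk_right a b)
  have key : fderiv ℝ F (a, b) (u, v)
      = fderiv ℝ (fun a' => Ld a' b) a u + fderiv ℝ (fun b' => Ld a b') b v := by
    rw [hL.fderiv, hR.fderiv]
    simp only [ContinuousLinearMap.coe_comp', Function.comp_apply,
      ContinuousLinearMap.inl_apply, ContinuousLinearMap.inr_apply]
    rw [← map_add]
    congr 1
    simp [Prod.ext_iff]
  rw [← key]
  exact hcomp

lemma hasDerivAt_inner_term (N : ℕ) (ωa ωb : ℕ → ℝ)
    (x y δ : ℕ → EuclideanSpace ℝ (Fin d)) (k : ℕ) :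
    HasDerivAt (fun ε : ℝ => (inner ℝ (Jm ωa (fun j => x j + ε • δ j) k)
        (Jp N ωb (fun j => y j + ε • δ j) k) : ℝ))
      ((inner ℝ (Jm ωa x k) (Jp N ωb δ k) : ℝ)
        + (inner ℝ (Jm ωa δ k) (Jp N ωb y k) : ℝ)) 0 := by
  have heq : (fun ε : ℝ => (inner ℝ (Jm ωa (fun j => x j + ε • δ j) k)
        (Jp N ωb (fun j => y j + ε • δ j) k) : ℝ))
      = fun ε : ℝ => (inner ℝ (Jm ωa x k + ε • Jm ωa δ k)
          (Jp N ωb y k + ε • Jp N ωb δ k) : ℝ) := by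
    funext ε; rw [Jm_add_smul, Jp_add_smul]
  rw [heq]
  have hf := hasDerivAt_affine (Jm ωa x k) (Jm ωa δ k)
  have hg := hasDerivAt_affine (Jp N ωb y k) (Jp N ωb δ k)
  have := hf.inner ℝ hg
  simpa using this

end Aux

/-- Sufficiency of the restricted discrete fractional Euler–Lagrange equations: if the
discrete Euler–Lagrange equations with fractional forcing hold for `k = 1,…,N-1`, then the
restricted first variation of the discrete action vanishes. -/
theorem restricted_discrete_EL_sufficient {d N : ℕ} (hN : 2 ≤ N) (μ h : ℝ)
    (hμ : 0 < μ) (hh : 0 < h)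
    (Ld : EuclideanSpace ℝ (Fin d) → EuclideanSpace ℝ (Fin d) → ℝ)
    (hLd : Differentiable ℝ
      (fun p : EuclideanSpace ℝ (Fin d) × EuclideanSpace ℝ (Fin d) => Ld p.1 p.2))
    (ωa ωb ωab : ℕ → ℝ)
    (hcauchy : ∀ n, ∑ j ∈ Finset.range (n + 1), ωa j * ωb (n - j) = ωab n)
    (x y : ℕ → EuclideanSpace ℝ (Fin d))
    (hELx : ∀ k, 1 ≤ k → k ≤ N - 1 → ∀ v : EuclideanSpace ℝ (Fin d),
      fderiv ℝ (fun a => Ld a (x (k + 1))) (x k) v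
          + fderiv ℝ (fun b => Ld (x (k - 1)) b) (x k) v
        = μ * h * (inner ℝ (Jm ωab x k) v : ℝ))
    (hELy : ∀ k, 1 ≤ k → k ≤ N - 1 → ∀ v : EuclideanSpace ℝ (Fin d),
      fderiv ℝ (fun a => Ld a (y (k + 1))) (y k) v
          + fderiv ℝ (fun b => Ld (y (k - 1)) b) (y k) v
        = μ * h * (inner ℝ (Jp N ωab y k) v : ℝ)) :
    ∀ δx : ℕ → EuclideanSpace ℝ (Fin d), δx 0 = 0 → δx N = 0 →
      HasDerivAt (fun ε : ℝ =>
        (∑ k ∈ Finset.range N,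
          (Ld (x k + ε • δx k) (x (k + 1) + ε • δx (k + 1))
            + Ld (y k + ε • δx k) (y (k + 1) + ε • δx (k + 1))))
        - μ * h * ∑ k ∈ Finset.range (N + 1),
            (inner ℝ (Jm ωa (fun j => x j + ε • δx j) k)
                   (Jp N ωb (fun j => y j + ε • δx j) k) : ℝ)) 0 0 := by
  intro δ hδ0 hδN
  -- derivative of the Lagrangian part
  have hsum : HasDerivAt (fun ε : ℝ => ∑ k ∈ Finset.range N,
      (Ld (x k + ε • δ k) (x (k + 1) + ε • δ (k + 1))
        + Ld (y k + ε • δ k) (y (k + 1) + ε • δ (k + 1))))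
      (∑ k ∈ Finset.range N,
        ((fderiv ℝ (fun a => Ld a (x (k+1))) (x k) (δ k)
            + fderiv ℝ (fun b => Ld (x k) b) (x (k+1)) (δ (k+1)))
          + (fderiv ℝ (fun a => Ld a (y (k+1))) (y k) (δ k)
            + fderiv ℝ (fun b => Ld (y k) b) (y (k+1)) (δ (k+1))))) 0 :=
    HasDerivAt.fun_sum fun k _ =>
      (hasDerivAt_Ld Ld hLd (x k) (x (k+1)) (δ k) (δ (k+1))).add
        (hasDerivAt_Ld Ld hLd (y k) (y (k+1)) (δ k) (δ (k+1)))
  -- derivative of the interaction part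
  have hinner : HasDerivAt (fun ε : ℝ => ∑ k ∈ Finset.range (N + 1),
      (inner ℝ (Jm ωa (fun j => x j + ε • δ j) k)
             (Jp N ωb (fun j => y j + ε • δ j) k) : ℝ))
      (∑ k ∈ Finset.range (N + 1),
        ((inner ℝ (Jm ωa x k) (Jp N ωb δ k) : ℝ)
          + (inner ℝ (Jm ωa δ k) (Jp N ωb y k) : ℝ))) 0 :=
    HasDerivAt.fun_sum fun k _ => hasDerivAt_inner_term N ωa ωb x y δ k
  have hT := hsum.sub ((hinner.const_mul (μ * h)))
  -- Now show the derivative value is zero.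
  have hzero : (∑ k ∈ Finset.range N,
        ((fderiv ℝ (fun a => Ld a (x (k+1))) (x k) (δ k)
            + fderiv ℝ (fun b => Ld (x k) b) (x (k+1)) (δ (k+1)))
          + (fderiv ℝ (fun a => Ld a (y (k+1))) (y k) (δ k)
            + fderiv ℝ (fun b => Ld (y k) b) (y (k+1)) (δ (k+1)))))
      - μ * h * (∑ k ∈ Finset.range (N + 1),
        ((inner ℝ (Jm ωa x k) (Jp N ωb δ k) : ℝ)
          + (inner ℝ (Jm ωa δ k) (Jp N ωb y k) : ℝ))) = 0 := by
    -- summation by parts on a generic sequence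
    have shift : ∀ z : ℕ → EuclideanSpace ℝ (Fin d),
        ∑ k ∈ Finset.range N,
          (fderiv ℝ (fun a => Ld a (z (k+1))) (z k) (δ k)
            + fderiv ℝ (fun b => Ld (z k) b) (z (k+1)) (δ (k+1)))
        = ∑ k ∈ Finset.Ico 1 N,
          (fderiv ℝ (fun a => Ld a (z (k+1))) (z k) (δ k)
            + fderiv ℝ (fun b => Ld (z (k-1)) b) (z k) (δ k)) := by
      intro z
      rw [Finset.sum_add_distrib, Finset.sum_add_distrib]
      congr 1
      · -- first-slot terms: drop k = 0 since δ 0 = 0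
        rw [Finset.range_eq_Ico, Finset.sum_eq_sum_Ico_succ_bot (by omega : 0 < N)]
        rw [hδ0, map_zero, zero_add]
      · -- second-slot terms: reindex k ↦ k+1, drop k = N since δ N = 0
        have e1 : ∀ k, fderiv ℝ (fun b => Ld (z k) b) (z (k+1)) (δ (k+1))
            = fderiv ℝ (fun b => Ld (z ((k+1)-1)) b) (z (k+1)) (δ (k+1)) := by
          intro k; simp
        rw [Finset.sum_congr rfl fun k _ => e1 k]
        have e2 : ∑ k ∈ Finset.Ico 1 (N+1),
            fderiv ℝ (fun b => Ld (z (k-1)) b) (z k) (δ k)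
            = ∑ k ∈ Finset.range N,
              fderiv ℝ (fun b => Ld (z ((k+1)-1)) b) (z (k+1)) (δ (k+1)) := by
          rw [Finset.sum_Ico_eq_sum_range]
          simp only [Nat.add_sub_cancel]
          exact Finset.sum_congr rfl fun k _ => by rw [add_comm 1 k]; norm_num
        rw [← e2, Finset.sum_Ico_succ_top (by omega : 1 ≤ N), hδN, map_zero, add_zero]
    have hx2 : ∑ k ∈ Finset.range N,
          (fderiv ℝ (fun a => Ld a (x (k+1))) (x k) (δ k)
            + fderiv ℝ (fun b => Ld (x k) b) (x (k+1)) (δ (k+1)))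
        = ∑ k ∈ Finset.Ico 1 N, μ * h * (inner ℝ (Jm ωab x k) (δ k) : ℝ) := by
      rw [shift x]
      refine Finset.sum_congr rfl fun k hk => ?_
      simp only [Finset.mem_Ico] at hk
      exact hELx k hk.1 (by omega) (δ k)
    have hy2 : ∑ k ∈ Finset.range N,
          (fderiv ℝ (fun a => Ld a (y (k+1))) (y k) (δ k)
            + fderiv ℝ (fun b => Ld (y k) b) (y (k+1)) (δ (k+1)))
        = ∑ k ∈ Finset.Ico 1 N, μ * h * (inner ℝ (Jp N ωab y k) (δ k) : ℝ) := by
      rw [shift y]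
      refine Finset.sum_congr rfl fun k hk => ?_
      simp only [Finset.mem_Ico] at hk
      exact hELy k hk.1 (by omega) (δ k)
    -- interaction part
    have hC : ∑ k ∈ Finset.range (N + 1),
        ((inner ℝ (Jm ωa x k) (Jp N ωb δ k) : ℝ)
          + (inner ℝ (Jm ωa δ k) (Jp N ωb y k) : ℝ))
        = ∑ k ∈ Finset.Ico 1 N,
          ((inner ℝ (Jm ωab x k) (δ k) : ℝ) + (inner ℝ (Jp N ωab y k) (δ k) : ℝ)) := by
      rw [Finset.sum_add_distrib]
      have c1 : ∑ k ∈ Finset.range (N + 1), (inner ℝ (Jm ωa x k) (Jp N ωb δ k) : ℝ)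
          = ∑ k ∈ Finset.range (N + 1), (inner ℝ (Jm ωab x k) (δ k) : ℝ) := by
        rw [← Jm_adjoint N ωb (fun j => Jm ωa x j) δ]
        exact Finset.sum_congr rfl fun k _ => by rw [Jm_comp ωa ωb ωab hcauchy]
      have c2 : ∑ k ∈ Finset.range (N + 1), (inner ℝ (Jm ωa δ k) (Jp N ωb y k) : ℝ)
          = ∑ k ∈ Finset.range (N + 1), (inner ℝ (Jp N ωab y k) (δ k) : ℝ) := by
        rw [Jm_adjoint N ωa δ (fun j => Jp N ωb y j)]
        refine Finset.sum_congr rfl fun k _ => ?_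
        rw [Jp_comp N ωa ωb ωab hcauchy, real_inner_comm]
      rw [c1, c2, ← Finset.sum_add_distrib]
      rw [Finset.sum_range_succ, hδN, inner_zero_right, inner_zero_right, add_zero, add_zero]
      rw [Finset.range_eq_Ico, Finset.sum_eq_sum_Ico_succ_bot (by omega : 0 < N)]
      rw [hδ0, inner_zero_right, inner_zero_right, add_zero, zero_add]
    rw [Finset.sum_add_distrib, hx2, hy2, hC, Finset.mul_sum, ← Finset.sum_add_distrib,
      ← Finset.sum_sub_distrib]
    refine Finset.sum_eq_zero fun k _ => ?_
    ring
  rwa [hzero] at hT
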